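/- arXiv:1910.04615 — 2 statements merged into one kernel-verified Lean document; each statement's English description precedes it below -/
import Mathlib

section
/- Let a_k = (cos(2πk/3), sin(2πk/3)) for k = 0, 1, 2 be three equidistant points on the unit circle in ℝ². For every real ε with √3/2 ≤ ε < 1, the learned space U_ε = ⋃_{k} closedBall(a_k, ε), equipped with the subspace topology of ℝ², is homotopy equivalent to the unit circle S¹ = {x ∈ ℝ² : ‖x‖ = 1}. -/
open Metric Real
open scoped RealInnerProductSpace

/-- Three equidistant points on the unit circle in ℝ². -/
noncomputable def teachPoint (k : Fin 3) : EuclideanSpace ℝ (Fin 2) :=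
  WithLp.toLp 2 ![Real.cos (2 * π * k / 3), Real.sin (2 * π * k / 3)]

/-- The unit circle S¹ ⊆ ℝ². -/
def unitCircle : Set (EuclideanSpace ℝ (Fin 2)) := {x | ‖x‖ = 1}

lemma cos23 : Real.cos (2*π/3) = -(1/2) := by
  rw [show (2*π/3:ℝ) = π - π/3 by ring, Real.cos_pi_sub, Real.cos_pi_div_three]
lemma sin23 : Real.sin (2*π/3) = Real.sqrt 3 / 2 := by
  rw [show (2*π/3:ℝ) = π - π/3 by ring, Real.sin_pi_sub, Real.sin_pi_div_three]
lemma cos43 : Real.cos (2*π*2/3) = -(1/2) := by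
  rw [show (2*π*2/3:ℝ) = π + π/3 by ring, Real.cos_add]
  simp [Real.cos_pi_div_three]
lemma sin43 : Real.sin (2*π*2/3) = -(Real.sqrt 3 / 2) := by
  rw [show (2*π*2/3:ℝ) = π + π/3 by ring, Real.sin_add]
  simp [Real.sin_pi_div_three]

lemma tp00 : teachPoint 0 0 = 1 := by simp [teachPoint]
lemma tp01 : teachPoint 0 1 = 0 := by simp [teachPoint]
lemma tp10 : teachPoint 1 0 = -(1/2) := by simp [teachPoint, cos23]
lemma tp11 : teachPoint 1 1 = Real.sqrt 3 / 2 := by simp [teachPoint, sin23]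
lemma tp20 : teachPoint 2 0 = -(1/2) := by simp [teachPoint, cos43]
lemma tp21 : teachPoint 2 1 = -(Real.sqrt 3 / 2) := by simp [teachPoint, sin43]

lemma norm_teachPoint (k : Fin 3) : ‖teachPoint k‖ = 1 := by
  rw [EuclideanSpace.norm_eq]
  simp only [teachPoint, Fin.sum_univ_two, Real.norm_eq_abs, sq_abs,
    Matrix.cons_val_zero, Matrix.cons_val_one, Matrix.head_cons]
  rw [Real.cos_sq_add_sin_sq, Real.sqrt_one]

lemma inner_tp (x : EuclideanSpace ℝ (Fin 2)) (k : Fin 3) :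
    (inner ℝ x (teachPoint k) : ℝ) = x 0 * teachPoint k 0 + x 1 * teachPoint k 1 := by
  simp [PiLp.inner_apply, Fin.sum_univ_two, RCLike.inner_apply]; ring

lemma normsq (x : EuclideanSpace ℝ (Fin 2)) : (x 0)^2 + (x 1)^2 = ‖x‖^2 := by
  rw [EuclideanSpace.norm_eq, Real.sq_sqrt (by positivity)]
  simp [Fin.sum_univ_two, Real.norm_eq_abs, sq_abs]

lemma exists_half (x : EuclideanSpace ℝ (Fin 2)) :
    ∃ k : Fin 3, ‖x‖ / 2 ≤ (inner ℝ x (teachPoint k) : ℝ) := by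
  have hs : (x 0)^2 + (x 1)^2 = ‖x‖^2 := normsq x
  have hr : (0:ℝ) ≤ ‖x‖ := norm_nonneg x
  have h3 : Real.sqrt 3 ^ 2 = 3 := Real.sq_sqrt (by norm_num)
  have h3' : (0:ℝ) ≤ Real.sqrt 3 := Real.sqrt_nonneg 3
  by_cases h0 : ‖x‖ / 2 ≤ x 0
  · exact ⟨0, by rw [inner_tp, tp00, tp01]; linarith⟩
  · push_neg at h0
    by_cases h1 : 0 ≤ x 1
    · refine ⟨1, ?_⟩
      rw [inner_tp, tp10, tp11]
      nlinarith [sq_nonneg (Real.sqrt 3 * x 1 - (‖x‖ + x 0)), sq_nonneg (x 0 + ‖x‖),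
        mul_nonneg h3' h1, sq_nonneg (x 0 - ‖x‖)]
    · push_neg at h1
      refine ⟨2, ?_⟩
      rw [inner_tp, tp20, tp21]
      nlinarith [sq_nonneg (Real.sqrt 3 * (-x 1) - (‖x‖ + x 0)), sq_nonneg (x 0 + ‖x‖),
        mul_nonneg h3' (le_of_lt (neg_pos.mpr h1)), sq_nonneg (x 0 - ‖x‖)]

lemma dist_sq (c : ℝ) (x : EuclideanSpace ℝ (Fin 2)) (k : Fin 3) :
    dist (c • x) (teachPoint k) ^ 2
      = c^2 * ‖x‖^2 - 2 * c * (inner ℝ x (teachPoint k) : ℝ) + 1 := by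
  rw [dist_eq_norm, @norm_sub_sq_real, norm_smul, real_inner_smul_left, norm_teachPoint,
    Real.norm_eq_abs, mul_pow, sq_abs]
  ring

lemma eps_sq {ε : ℝ} (hε₁ : Real.sqrt 3 / 2 ≤ ε) : 3/4 ≤ ε^2 ∧ 0 ≤ ε := by
  have h3 : Real.sqrt 3 ^ 2 = 3 := Real.sq_sqrt (by norm_num)
  have h3' : (0:ℝ) ≤ Real.sqrt 3 := Real.sqrt_nonneg 3
  constructor
  · nlinarith
  · linarith

lemma ne_zero_of_mem {ε : ℝ} (hε₂ : ε < 1) {x : EuclideanSpace ℝ (Fin 2)} {k : Fin 3}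
    (hx : x ∈ closedBall (teachPoint k) ε) : x ≠ 0 := by
  rintro rfl
  rw [mem_closedBall, dist_eq_norm, zero_sub, norm_neg, norm_teachPoint] at hx
  linarith

lemma half_mem {ε : ℝ} (hε₁ : Real.sqrt 3 / 2 ≤ ε) {u : EuclideanSpace ℝ (Fin 2)}
    (hu : ‖u‖ = 1) : (2⁻¹ : ℝ) • u ∈ ⋃ k : Fin 3, closedBall (teachPoint k) ε := by
  obtain ⟨he, he0⟩ := eps_sq hε₁
  obtain ⟨k, hk⟩ := exists_half u
  refine Set.mem_iUnion.2 ⟨k, ?_⟩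
  rw [mem_closedBall]
  have hd := dist_sq 2⁻¹ u k
  rw [hu] at hd
  nlinarith [dist_nonneg (x := (2⁻¹:ℝ) • u) (y := teachPoint k)]


lemma convex_aux (ε r d t : ℝ) (hd : 1/2 ≤ d) (he : 3/4 ≤ ε^2)
    (hfr : r^2 - 2*r*d + 1 ≤ ε^2) (ht0 : 0 ≤ t) (ht1 : t ≤ 1) :
    ((1-t)*r + t*(1/2))^2 - 2*((1-t)*r + t*(1/2))*d + 1 ≤ ε^2 := by
  nlinarith [mul_nonneg (mul_nonneg ht0 (sub_nonneg.2 ht1)) (sq_nonneg (r - 1/2))]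

/-- Key lemma: the radial segment between x and (1/2)•(x/‖x‖) stays in U. -/
lemma seg_mem {ε : ℝ} (hε₁ : Real.sqrt 3 / 2 ≤ ε) (hε₂ : ε < 1)
    {x : EuclideanSpace ℝ (Fin 2)}
    (hx : x ∈ ⋃ k : Fin 3, closedBall (teachPoint k) ε)
    {t : ℝ} (ht0 : 0 ≤ t) (ht1 : t ≤ 1) :
    ((1 - t) + t * (2 * ‖x‖)⁻¹) • x ∈ ⋃ k : Fin 3, closedBall (teachPoint k) ε := by
  obtain ⟨he, he0⟩ := eps_sq hε₁
  obtain ⟨k, hk⟩ := Set.mem_iUnion.1 hx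
  have hx0 : x ≠ 0 := ne_zero_of_mem hε₂ hk
  have hr : 0 < ‖x‖ := norm_pos_iff.2 hx0
  obtain ⟨k₁, hk₁⟩ := exists_half x
  have hdk : dist x (teachPoint k) ^ 2 = ‖x‖^2 - 2 * (inner ℝ x (teachPoint k) : ℝ) + 1 := by
    simpa using dist_sq 1 x k
  have hkd : dist x (teachPoint k) ≤ ε := mem_closedBall.1 hk
  obtain ⟨k', hc', hd'⟩ : ∃ k' : Fin 3, ‖x‖/2 ≤ (inner ℝ x (teachPoint k') : ℝ) ∧
      ‖x‖^2 - 2 * (inner ℝ x (teachPoint k') : ℝ) + 1 ≤ ε^2 := by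
    rcases le_total (inner ℝ x (teachPoint k) : ℝ) (inner ℝ x (teachPoint k₁) : ℝ) with h | h
    · exact ⟨k₁, hk₁, by nlinarith [dist_nonneg (x := x) (y := teachPoint k)]⟩
    · exact ⟨k, le_trans hk₁ h, by nlinarith [dist_nonneg (x := x) (y := teachPoint k)]⟩
  refine Set.mem_iUnion.2 ⟨k', mem_closedBall.2 ?_⟩
  set r := ‖x‖ with hrdef
  set c := (inner ℝ x (teachPoint k') : ℝ) with hcdef
  set μ : ℝ := (1 - t) + t * (2 * r)⁻¹ with hμ
  have hd := dist_sq μ x k'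
  have h1 : μ * r = (1-t)*r + t*(1/2) := by rw [hμ]; field_simp
  have h2 : μ * c = (μ*r)*(c/r) := by field_simp
  have hcd : 1/2 ≤ c / r := by rw [le_div_iff₀ hr]; linarith
  have hfr : r^2 - 2*r*(c/r) + 1 ≤ ε^2 := by
    have h3 : 2*r*(c/r) = 2*c := by field_simp
    rw [h3]; linarith
  have hmain : μ^2 * r^2 - 2*μ*c + 1 ≤ ε^2 := by
    have heq : μ^2 * r^2 - 2*μ*c + 1
        = ((1-t)*r + t*(1/2))^2 - 2*((1-t)*r + t*(1/2))*(c/r) + 1 := by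
      rw [← h1]; linear_combination (-2 : ℝ) * h2
    rw [heq]
    exact convex_aux ε r (c/r) t hcd he hfr ht0 ht1
  nlinarith [dist_nonneg (x := μ • x) (y := teachPoint k'), hd, hmain]


theorem stmt_0 (ε : ℝ) (hε₁ : Real.sqrt 3 / 2 ≤ ε) (hε₂ : ε < 1) :
    Nonempty
      (ContinuousMap.HomotopyEquiv
        (↥(⋃ k : Fin 3, closedBall (teachPoint k) ε)) (↥unitCircle)) := by
  set U : Set (EuclideanSpace ℝ (Fin 2)) := ⋃ k : Fin 3, closedBall (teachPoint k) ε with hU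
  have hne : ∀ x : U, ‖(x : EuclideanSpace ℝ (Fin 2))‖ ≠ 0 := by
    rintro ⟨x, hx⟩
    obtain ⟨k, hk⟩ := Set.mem_iUnion.1 hx
    exact norm_ne_zero_iff.2 (ne_zero_of_mem hε₂ hk)
  let F : C(U, unitCircle) :=
    ⟨fun x => ⟨‖(x : EuclideanSpace ℝ (Fin 2))‖⁻¹ • (x : EuclideanSpace ℝ (Fin 2)), by
        show ‖_‖ = 1
        rw [norm_smul, norm_inv, norm_norm, inv_mul_cancel₀ (hne x)]⟩,
      Continuous.subtype_mk
        (((continuous_norm.comp continuous_subtype_val).inv₀ hne).smul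
          continuous_subtype_val)
        (fun x => by
          have h : ‖(‖(x : EuclideanSpace ℝ (Fin 2))‖⁻¹ •
              (x : EuclideanSpace ℝ (Fin 2)) : EuclideanSpace ℝ (Fin 2))‖ = 1 := by
            rw [norm_smul, norm_inv, norm_norm, inv_mul_cancel₀ (hne x)]
          exact h)⟩
  let G : C(unitCircle, U) :=
    ⟨fun u => ⟨(2⁻¹ : ℝ) • (u : EuclideanSpace ℝ (Fin 2)), half_mem hε₁ u.2⟩,
      Continuous.subtype_mk (continuous_subtype_val.const_smul (2⁻¹ : ℝ) :
          Continuous fun u : unitCircle => (2⁻¹ : ℝ) • (u : EuclideanSpace ℝ (Fin 2)))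
        (fun u => half_mem hε₁ u.2)⟩
  have hFG : F.comp G = ContinuousMap.id unitCircle := by
    apply ContinuousMap.ext
    intro u
    apply Subtype.ext
    show (‖((2⁻¹ : ℝ) • (u : EuclideanSpace ℝ (Fin 2)))‖⁻¹ •
        ((2⁻¹ : ℝ) • (u : EuclideanSpace ℝ (Fin 2))) : EuclideanSpace ℝ (Fin 2)) = u
    have hu : ‖(u : EuclideanSpace ℝ (Fin 2))‖ = 1 := u.2
    rw [norm_smul, hu, smul_smul]
    norm_num
  have hcont : Continuous fun p : unitInterval × U =>
      ((1 - (p.1 : ℝ)) + (p.1 : ℝ) * (2 * ‖(p.2 : EuclideanSpace ℝ (Fin 2))‖)⁻¹) := by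
    have h1 : Continuous fun p : unitInterval × U => (p.1 : ℝ) :=
      continuous_subtype_val.comp continuous_fst
    have h2 : Continuous fun p : unitInterval × U =>
        (2 * ‖(p.2 : EuclideanSpace ℝ (Fin 2))‖)⁻¹ := by
      refine Continuous.inv₀ (continuous_const.mul
        (continuous_norm.comp (continuous_subtype_val.comp continuous_snd))) ?_
      intro p
      have := hne p.2
      positivity
    exact (continuous_const.sub h1).add (h1.mul h2)
  let H : (ContinuousMap.id U).Homotopy (G.comp F) :=
    { toFun := fun p =>
        ⟨((1 - (p.1 : ℝ)) + (p.1 : ℝ) * (2 * ‖(p.2 : EuclideanSpace ℝ (Fin 2))‖)⁻¹) •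
            (p.2 : EuclideanSpace ℝ (Fin 2)),
          seg_mem hε₁ hε₂ p.2.2 p.1.2.1 p.1.2.2⟩
      continuous_toFun :=
        Continuous.subtype_mk (hcont.smul (continuous_subtype_val.comp continuous_snd))
          (fun p => seg_mem hε₁ hε₂ p.2.2 p.1.2.1 p.1.2.2)
      map_zero_left := by
        intro x
        apply Subtype.ext
        show ((1 - ((0 : unitInterval) : ℝ)) + _) • _ = _
        norm_num
      map_one_left := by
        intro x
        apply Subtype.ext
        show ((1 - ((1 : unitInterval) : ℝ)) + ((1 : unitInterval) : ℝ) *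
            (2 * ‖(x : EuclideanSpace ℝ (Fin 2))‖)⁻¹) • (x : EuclideanSpace ℝ (Fin 2))
          = (2⁻¹ : ℝ) • (‖(x : EuclideanSpace ℝ (Fin 2))‖⁻¹ • (x : EuclideanSpace ℝ (Fin 2)))
        rw [smul_smul, mul_inv]
        norm_num }
  exact ⟨⟨F, G, ⟨H.symm⟩, hFG ▸ ⟨ContinuousMap.Homotopy.refl _⟩⟩⟩
end

section
/- For every natural number n, every subset D of ℝⁿ (Euclidean n-space) with at most two elements, and every ε > 0, the union ⋃_{x∈D} closedBall(x, ε), equipped with the subspace topology, is not homotopy equivalent to the unit circle S¹ = {x ∈ ℝ² : ‖x‖ = 1}. -/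
open Metric Real

open Complex

lemma myNormOne_ne_zero {u : ℂ} (hu : ‖u‖ = 1) : u ≠ 0 := by
  intro h; rw [h] at hu; simp at hu

lemma myAbsArgLt {u : ℂ} (hu : ‖u‖ = 1) (hd : ‖u - 1‖ ≤ 1) : |arg u| < π / 2 := by
  have h1 : normSq u = 1 := by
    have : ‖u‖ ^ 2 = 1 := by rw [hu]; norm_num
    rwa [Complex.sq_norm] at this
  have h2 : normSq (u - 1) ≤ 1 := by
    have : ‖u - 1‖ ^ 2 ≤ 1 := by nlinarith [norm_nonneg (u - 1)]
    rwa [Complex.sq_norm] at this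
  have e1 : normSq (u - 1) = normSq u - 2 * u.re + 1 := by
    simp [normSq_apply, sub_re, sub_im]; ring
  have hre : 0 < u.re := by nlinarith
  exact abs_arg_lt_pi_div_two_iff.2 (Or.inl hre)

lemma myExpArg {z : ℂ} (hz : ‖z‖ = 1) : Complex.exp (arg z * I) = z := by
  have h := norm_mul_exp_arg_mul_I z
  rw [hz] at h
  simpa using h

lemma myRatio {x y : ℂ} (hx : ‖x‖ = 1) (hy : ‖y‖ = 1) (hxy : ‖y - x‖ ≤ 1) :
    ‖y / x‖ = 1 ∧ ‖y / x - 1‖ ≤ 1 := by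
  have hx0 := myNormOne_ne_zero hx
  constructor
  · rw [norm_div, hx, hy]; norm_num
  · have : y / x - 1 = (y - x) / x := by field_simp
    rw [this, norm_div, hx, div_one]; exact hxy

lemma myStep {a a' b b' : ℂ} (ha : ‖a‖ = 1) (ha' : ‖a'‖ = 1) (hb : ‖b‖ = 1) (hb' : ‖b'‖ = 1)
    (h1 : ‖a' - a‖ ≤ 1) (h2 : ‖b' - b‖ ≤ 1) (h3 : ‖b - a‖ ≤ 1) (h4 : ‖b' - a'‖ ≤ 1) :
    arg (b' / b) - arg (a' / a) = arg (b' / a') - arg (b / a) := by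
  have ha0 := myNormOne_ne_zero ha
  have ha0' := myNormOne_ne_zero ha'
  have hb0 := myNormOne_ne_zero hb
  have hb0' := myNormOne_ne_zero hb'
  obtain ⟨r1, r1'⟩ := myRatio hb hb' h2
  obtain ⟨r2, r2'⟩ := myRatio ha ha' h1
  obtain ⟨r3, r3'⟩ := myRatio ha' hb' h4
  obtain ⟨r4, r4'⟩ := myRatio ha hb h3
  set v : ℝ := arg (b' / b) - arg (a' / a) - arg (b' / a') + arg (b / a) with hv
  have habs : |v| < 2 * π := by
    have B1 := myAbsArgLt r1 r1'
    have B2 := myAbsArgLt r2 r2'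
    have B3 := myAbsArgLt r3 r3'
    have B4 := myAbsArgLt r4 r4'
    have := abs_sub_abs_le_abs_sub v 0
    calc |v| ≤ |arg (b' / b)| + |arg (a' / a)| + |arg (b' / a')| + |arg (b / a)| := by
          rw [hv]
          calc |arg (b' / b) - arg (a' / a) - arg (b' / a') + arg (b / a)|
              ≤ |arg (b' / b) - arg (a' / a) - arg (b' / a')| + |arg (b / a)| := abs_add_le _ _
            _ ≤ |arg (b' / b) - arg (a' / a)| + |arg (b' / a')| + |arg (b / a)| := by
                gcongr; exact abs_sub _ _
            _ ≤ |arg (b' / b)| + |arg (a' / a)| + |arg (b' / a')| + |arg (b / a)| := by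
                gcongr; exact abs_sub _ _
      _ < 2 * π := by linarith
  have hexp : Complex.exp (↑v * I) = 1 := by
    have : (↑v : ℂ) * I = ↑(arg (b' / b)) * I + (-(↑(arg (a' / a)) * I)) +
        (-(↑(arg (b' / a')) * I)) + ↑(arg (b / a)) * I := by
      rw [hv]; push_cast; ring
    rw [this, Complex.exp_add, Complex.exp_add, Complex.exp_add, Complex.exp_neg,
      Complex.exp_neg, myExpArg r1, myExpArg r2, myExpArg r3, myExpArg r4]
    field_simp
  obtain ⟨n, hn⟩ := Complex.exp_eq_one_iff.1 hexp
  have hveq : v = n * (2 * π) := by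
    have h' : (↑v : ℂ) * I = (↑(n * (2 * π) : ℝ)) * I := by rw [hn]; push_cast; ring
    have := mul_right_cancel₀ Complex.I_ne_zero h'
    exact_mod_cast this
  have hn0 : n = 0 := by
    by_contra h
    have h1le : (1 : ℝ) ≤ |(n : ℝ)| := by exact_mod_cast Int.one_le_abs (by omega)
    rw [hveq, abs_mul] at habs
    have : |(2 * π : ℝ)| = 2 * π := abs_of_pos (by positivity)
    rw [this] at habs
    nlinarith [pi_pos]
  rw [hn0] at hveq
  simp at hveq
  rw [hv] at hveq
  linarith

lemma myTele (f g : ℕ → ℂ) : ∀ N : ℕ, (∀ k, k ≤ N → ‖f k‖ = 1) → (∀ k, k ≤ N → ‖g k‖ = 1) →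
    (∀ k, k < N → ‖f (k + 1) - f k‖ ≤ 1) → (∀ k, k < N → ‖g (k + 1) - g k‖ ≤ 1) →
    (∀ k, k ≤ N → ‖g k - f k‖ ≤ 1) →
    (∑ k ∈ Finset.range N, arg (g (k + 1) / g k)) - ∑ k ∈ Finset.range N, arg (f (k + 1) / f k)
      = arg (g N / f N) - arg (g 0 / f 0)
  | 0 => by intros; simp
  | (N + 1) => by
    intro hf hg hfs hgs hfg
    rw [Finset.sum_range_succ, Finset.sum_range_succ]
    have ih := myTele f g N (fun k hk => hf k (by omega)) (fun k hk => hg k (by omega))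
      (fun k hk => hfs k (by omega)) (fun k hk => hgs k (by omega))
      (fun k hk => hfg k (by omega))
    have st := myStep (hf N (by omega)) (hf (N + 1) (by omega)) (hg N (by omega))
      (hg (N + 1) (by omega)) (hfs N (by omega)) (hgs N (by omega))
      (hfg N (by omega)) (hfg (N + 1) (by omega))
    linarith


noncomputable def e2 : ℂ ≃ₗᵢ[ℝ] EuclideanSpace ℝ (Fin 2) := Complex.orthonormalBasisOneI.repr

lemma circle_not_contractible : ¬ ContractibleSpace ↥unitCircle := by
  intro h
  obtain ⟨c, ⟨F⟩⟩ := id_nullhomotopic ↥unitCircle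
  have hmem : ∀ t : ℝ, e2 (Complex.exp ((2 * π * t : ℝ) * Complex.I)) ∈ unitCircle := by
    intro t
    show ‖_‖ = 1
    rw [e2.norm_map, Complex.norm_exp_ofReal_mul_I]
  set γ : unitInterval → ↥unitCircle :=
    fun t => ⟨e2 (Complex.exp ((2 * π * (t : ℝ) : ℝ) * Complex.I)), hmem _⟩ with hγ
  have hγcont : Continuous γ := by
    apply Continuous.subtype_mk
    apply e2.continuous.comp
    apply Complex.continuous_exp.comp
    continuity
  set K : C(unitInterval × unitInterval, ℂ) :=
    ⟨fun p => e2.symm ((F (p.1, γ p.2)) : EuclideanSpace ℝ (Fin 2)),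
      e2.symm.continuous.comp (continuous_subtype_val.comp
        (F.continuous.comp (continuous_fst.prodMk (hγcont.comp continuous_snd))))⟩ with hK
  have norm1 : ∀ p, ‖K p‖ = 1 := by
    intro p
    show ‖e2.symm _‖ = 1
    rw [e2.symm.norm_map]
    exact (F (p.1, γ p.2)).2
  have hu : UniformContinuous K := CompactSpace.uniformContinuous_of_continuous K.continuous
  rw [Metric.uniformContinuous_iff] at hu
  obtain ⟨δ, hδ, hδ'⟩ := hu 1 one_pos
  obtain ⟨N, hN⟩ := exists_nat_gt (max 2 (1 / δ))
  have hN2 : (2 : ℝ) < N := lt_of_le_of_lt (le_max_left _ _) hN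
  have hN0 : (0 : ℝ) < N := by linarith
  have hNδ : 1 / δ < N := lt_of_le_of_lt (le_max_right _ _) hN
  have hstep : (1 : ℝ) / N < δ := by
    rw [div_lt_iff₀ hN0]
    rw [div_lt_iff₀ hδ] at hNδ
    nlinarith
  set ι : ℕ → unitInterval := fun k => Set.projIcc 0 1 zero_le_one ((k : ℝ) / N) with hι
  have hιcoe : ∀ k : ℕ, k ≤ N → ((ι k : ℝ)) = k / N := by
    intro k hk
    rw [hι]
    simp only
    rw [Set.projIcc_of_mem]
    constructor
    · positivity
    · rw [div_le_one hN0]; exact_mod_cast hk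
  have hιdist : ∀ k : ℕ, dist (ι (k + 1)) (ι k) < δ := by
    intro k
    have := (LipschitzWith.projIcc (zero_le_one (α := ℝ))).dist_le_mul
      (((k : ℝ) + 1) / N) ((k : ℝ) / N)
    calc dist (ι (k + 1)) (ι k) ≤ 1 * dist (((k : ℝ) + 1) / N) ((k : ℝ) / N) := by
          rw [hι]; simp only; push_cast; exact this
      _ = 1 / N := by
          rw [one_mul, Real.dist_eq, show ((k : ℝ) + 1) / N - (k : ℝ) / N = 1 / N from by
            field_simp; ring, _root_.abs_of_pos (by positivity)]
      _ < δ := hstep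
  have KD : ∀ p q : unitInterval × unitInterval, dist p q < δ → ‖K p - K q‖ ≤ 1 := by
    intro p q h
    rw [← dist_eq_norm]
    exact le_of_lt (hδ' h)
  set W : ℕ → ℝ := fun j => ∑ k ∈ Finset.range N, Complex.arg (K (ι j, ι (k + 1)) / K (ι j, ι k))
    with hW
  have hNN : ι N = (1 : unitInterval) := by
    apply Subtype.ext
    rw [hιcoe N le_rfl]
    field_simp
    rfl
  have hI0 : ι 0 = (0 : unitInterval) := by
    apply Subtype.ext
    rw [hιcoe 0 (by omega)]
    simp
  have hγloop : γ (ι N) = γ (ι 0) := by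
    rw [hNN, hI0]
    apply Subtype.ext
    rw [hγ]
    simp only [Set.Icc.coe_one, Set.Icc.coe_zero, mul_one, mul_zero]
    push_cast
    rw [Complex.exp_two_pi_mul_I, zero_mul, Complex.exp_zero]
  have hloop : ∀ s, K (s, ι N) = K (s, ι 0) := by
    intro s
    show e2.symm _ = e2.symm _
    rw [hγloop]
  have chain : ∀ j, j < N → W (j + 1) = W j := by
    intro j hj
    have key := myTele (fun k => K (ι j, ι k)) (fun k => K (ι (j + 1), ι k)) N
      (fun k _ => norm1 _) (fun k _ => norm1 _)
      (fun k _ => KD _ _ (by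
        rw [Prod.dist_eq]
        exact max_lt (by simpa using hδ) (hιdist k)))
      (fun k _ => KD _ _ (by
        rw [Prod.dist_eq]
        exact max_lt (by simpa using hδ) (hιdist k)))
      (fun k _ => KD _ _ (by
        rw [Prod.dist_eq]
        exact max_lt (hιdist j) (by simpa using hδ)))
    simp only [hloop (ι j), hloop (ι (j + 1)), sub_self] at key
    simp only [hW]
    linarith [key]
  have hWall : ∀ j, j ≤ N → W j = W 0 := by
    intro j
    induction j with
    | zero => intro _; rfl
    | succ m ih => intro hm; rw [chain m (by omega), ih (by omega)]
  have hWN : W N = 0 := by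
    rw [hW]
    apply Finset.sum_eq_zero
    intro k _
    have hc : ∀ t, K (ι N, t) = e2.symm (c : EuclideanSpace ℝ (Fin 2)) := by
      intro t
      show e2.symm _ = _
      rw [hNN]
      congr 1
      exact congrArg _ (F.apply_one _)
    rw [hc, hc, div_self, Complex.arg_one]
    intro h0
    have := norm1 (ι N, ι 0)
    rw [hc, h0] at this
    simp at this
  have hW0 : W 0 = N * (2 * π / N) := by
    simp only [hW]
    have hval : ∀ k : ℕ, k ≤ N →
        K (ι 0, ι k) = Complex.exp ((2 * π * ((k : ℝ) / N) : ℝ) * Complex.I) := by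
      intro k hk
      show e2.symm _ = _
      rw [hI0]
      have : F ((0 : unitInterval), γ (ι k)) = γ (ι k) := F.apply_zero _
      rw [this, hγ]
      simp only
      rw [e2.symm_apply_apply, hιcoe k hk]
    have hterm : ∀ k ∈ Finset.range N,
        Complex.arg (K (ι 0, ι (k + 1)) / K (ι 0, ι k)) = 2 * π / N := by
      intro k hk
      rw [Finset.mem_range] at hk
      rw [hval (k + 1) (by omega), hval k (by omega), ← Complex.exp_sub,
        show ((2 * π * (((k + 1 : ℕ) : ℝ) / N) : ℝ) : ℂ) * Complex.I -
            ((2 * π * ((k : ℝ) / N) : ℝ) : ℂ) * Complex.I = ((2 * π / N : ℝ) : ℂ) * Complex.I from by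
          have hNc : ((N : ℂ)) ≠ 0 := by exact_mod_cast ne_of_gt hN0
          push_cast
          field_simp
          ring, Complex.arg_exp_mul_I]
      apply (toIocMod_eq_self _).2
      constructor
      · have : (0 : ℝ) < 2 * π / N := by positivity
        linarith [pi_pos]
      · have : (2 * π / N : ℝ) ≤ π := by rw [div_le_iff₀ hN0]; nlinarith [pi_pos]
        linarith
    rw [Finset.sum_congr rfl hterm, Finset.sum_const, Finset.card_range, nsmul_eq_mul]
  have : (0 : ℝ) = 2 * π := by
    have h1 := hWall N le_rfl
    rw [hWN] at h1
    rw [hW0] at h1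
    field_simp at h1
    linarith [h1]
  linarith [pi_pos, this]


lemma myPathConn {X Y : Type*} [TopologicalSpace X] [TopologicalSpace Y]
    (e : ContinuousMap.HomotopyEquiv X Y) [PathConnectedSpace Y] : PathConnectedSpace X := by
  obtain ⟨H⟩ := e.left_inv
  refine ⟨⟨e.invFun (Nonempty.some inferInstance)⟩, fun x y => ?_⟩
  have hx : Joined (e.invFun (e.toFun x)) x := ⟨H.evalAt x⟩
  have hy : Joined (e.invFun (e.toFun y)) y := ⟨H.evalAt y⟩
  have hmid : Joined (e.toFun x) (e.toFun y) := PathConnectedSpace.joined _ _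
  have h2 : Joined (e.invFun (e.toFun x)) (e.invFun (e.toFun y)) :=
    ⟨Path.map (Joined.somePath hmid) e.invFun.continuous⟩
  exact Joined.trans (Joined.trans (Joined.symm hx) h2) hy

lemma unitCircle_eq : unitCircle = Metric.sphere (0 : EuclideanSpace ℝ (Fin 2)) 1 := by
  ext x
  simp [unitCircle, mem_sphere_zero_iff_norm]

lemma unitCircle_pathConn : PathConnectedSpace ↥unitCircle := by
  rw [unitCircle_eq]
  rw [← isPathConnected_iff_pathConnectedSpace]
  apply isPathConnected_sphere _ _ zero_le_one
  rw [← Module.finrank_eq_rank]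
  rw [finrank_euclideanSpace_fin]
  exact_mod_cast Nat.one_lt_two

lemma myDisconn {E : Type*} [MetricSpace E] {B1 B2 : Set E} (h1 : IsClosed B1)
    (h2 : IsClosed B2) {a b : E} (ha : a ∈ B1) (hb : b ∈ B2)
    (hint : ¬ (B1 ∩ B2).Nonempty) : ¬ ConnectedSpace ↥(B1 ∪ B2) := by
  intro hc
  haveI := hc
  set A : Set ↥(B1 ∪ B2) := Subtype.val ⁻¹' B1 with hA
  have hAc : IsClosed A := h1.preimage continuous_subtype_val
  have hAcompl : Aᶜ = Subtype.val ⁻¹' B2 := by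
    ext p
    simp only [hA, Set.mem_compl_iff, Set.mem_preimage]
    constructor
    · intro hp
      rcases p.2 with h | h
      · exact absurd h hp
      · exact h
    · intro hp hp'
      exact hint ⟨p, hp', hp⟩
  have hAc2 : IsClosed Aᶜ := by rw [hAcompl]; exact h2.preimage continuous_subtype_val
  have hAo : IsOpen A := compl_compl A ▸ hAc2.isOpen_compl
  rcases isClopen_iff.1 ⟨hAc, hAo⟩ with h | h
  · have hmA : (⟨a, Or.inl ha⟩ : ↥(B1 ∪ B2)) ∈ A := ha
    rw [h] at hmA
    exact hmA
  · have hmB : (⟨b, Or.inr hb⟩ : ↥(B1 ∪ B2)) ∉ A := fun hm => hint ⟨b, hm, hb⟩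
    rw [h] at hmB
    exact hmB (Set.mem_univ _)

theorem stmt_2 (n : ℕ) (D : Set (EuclideanSpace ℝ (Fin n))) (hD : D.encard ≤ 2)
    (ε : ℝ) (hε : 0 < ε) :
    ¬ Nonempty (ContinuousMap.HomotopyEquiv
        (↥(⋃ x ∈ D, closedBall x ε)) (↥unitCircle)) := by
  rintro ⟨e⟩
  have hcontr : ¬ ContractibleSpace ↥(⋃ x ∈ D, Metric.closedBall x ε) := by
    intro hc
    exact circle_not_contractible e.symm.contractibleSpace
  have hcases : D = ∅ ∨ (∃ x, D = {x}) ∨ ∃ x y, x ≠ y ∧ D = {x, y} := by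
    rcases hD.lt_or_eq with h | h
    · rw [show (2 : ℕ∞) = 1 + 1 from rfl, ENat.lt_add_one_iff (by simp)] at h
      rcases Set.encard_le_one_iff_eq.1 h with h | h
      · exact Or.inl h
      · exact Or.inr (Or.inl h)
    · exact Or.inr (Or.inr (Set.encard_eq_two.1 h))
  rcases hcases with rfl | ⟨x, rfl⟩ | ⟨x, y, hxy, rfl⟩
  · have pt : ↥unitCircle := ⟨EuclideanSpace.single 0 1, by
      show ‖_‖ = 1
      rw [EuclideanSpace.norm_single]
      norm_num⟩
    have z := e.invFun pt
    simpa using z.2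
  · apply hcontr
    have hset : (⋃ y ∈ ({x} : Set (EuclideanSpace ℝ (Fin n))), Metric.closedBall y ε)
        = Metric.closedBall x ε := by simp
    rw [hset]
    exact (convex_closedBall x ε).contractibleSpace ⟨x, Metric.mem_closedBall_self hε.le⟩
  · have hset : (⋃ z ∈ ({x, y} : Set (EuclideanSpace ℝ (Fin n))), Metric.closedBall z ε)
        = Metric.closedBall x ε ∪ Metric.closedBall y ε := by simp
    by_cases hint : (Metric.closedBall x ε ∩ Metric.closedBall y ε).Nonempty
    · obtain ⟨p, hp1, hp2⟩ := hint
      apply hcontr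
      rw [hset]
      exact (((convex_closedBall x ε).starConvex hp1).union
        ((convex_closedBall y ε).starConvex hp2)).contractibleSpace
        ⟨x, Or.inl (Metric.mem_closedBall_self hε.le)⟩
    · haveI := unitCircle_pathConn
      have pc : PathConnectedSpace ↥(⋃ z ∈ ({x, y} : Set (EuclideanSpace ℝ (Fin n))),
          Metric.closedBall z ε) := myPathConn e
      rw [hset] at pc
      haveI := pc
      exact myDisconn Metric.isClosed_closedBall Metric.isClosed_closedBall
        (Metric.mem_closedBall_self hε.le) (Metric.mem_closedBall_self hε.le) hint inferInstance
end
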